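/- In the ring of formal power series ℤ[[q]], the identity (∏_{i=1}^{p} (1 − q^i)) · ∑_{n≥0} a_n q^n = ∑_{π ∈ L(P)} q^{maj(π)} holds, where a_n is the (finite) number of P-partitions σ with σ(1)+⋯+σ(p) = n. -/

import Mathlib

open scoped Classical

/-- A `P`-partition for the partial order `P` on `Fin p`. -/
def IsPPartition (p : ℕ) (P : PartialOrder (Fin p)) (σ : Fin p → ℕ) : Prop :=
  ∀ i j : Fin p, P.lt i j → σ j ≤ σ i ∧ (j < i → σ j < σ i)

/-- `π` is a linear extension of `P`. -/
def IsLinExt (p : ℕ) (P : PartialOrder (Fin p)) (π : Equiv.Perm (Fin p)) : Prop :=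
  ∀ i j : Fin p, P.lt (π i) (π j) → i < j

/-- The descent set (1-based positions). -/
def desSet (p : ℕ) (f : Fin p → ℕ) : Finset ℕ :=
  (Finset.Ico 1 p).filter fun i =>
    ∃ (h1 : i - 1 < p) (h2 : i < p), f ⟨i, h2⟩ < f ⟨i - 1, h1⟩

/-- `a_n` : the number of `P`-partitions `σ` with `σ(1)+⋯+σ(p) = n` (all values of
such a `σ` are automatically at most `n`). -/
noncomputable def numPPartitionsOf (p : ℕ) (P : PartialOrder (Fin p)) (n : ℕ) : ℕ :=
  (Finset.univ.filter (fun σ : Fin p → Fin (n + 1) =>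
      IsPPartition p P (fun i => (σ i : ℕ)) ∧ (∑ i, (σ i : ℕ)) = n)).card

noncomputable section PPartAux

open Finset PowerSeries

variable {p : ℕ}

/-! ### Generic arithmetic lemmas -/

lemma PPart.chain_mono {p : ℕ} {f : ℕ → ℕ} (h : ∀ k, k + 1 < p → f (k + 1) ≤ f k) :
    ∀ a b, a ≤ b → b < p → f b ≤ f a := by
  intro a b
  induction b with
  | zero => intro h1 _; exact le_of_eq (by rw [Nat.le_zero.mp h1])
  | succ b ih =>
    intro hab hbp
    rcases Nat.eq_or_lt_of_le hab with rfl | hab'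
    · exact le_rfl
    · exact (h b hbp).trans (ih (by omega) (by omega))

lemma PPart.chain_tie {p : ℕ} {f g : ℕ → ℕ} (hmono : ∀ k, k + 1 < p → f (k + 1) ≤ f k)
    (htie : ∀ k, k + 1 < p → f (k + 1) = f k → g k < g (k + 1)) :
    ∀ a b, a < b → b < p → f a = f b → g a < g b := by
  intro a b
  induction b with
  | zero => omega
  | succ b ih =>
    intro hab hbp hf
    by_cases hab' : a = b
    · subst hab'; exact htie a hbp hf.symm
    · have hba : f b ≤ f a := PPart.chain_mono hmono a b (by omega) (by omega)
      have h1 : f (b + 1) ≤ f b := hmono b hbp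
      have hfb : f a = f b := by omega
      exact (ih (by omega) (by omega) hfb).trans (htie b hbp (by omega))

lemma PPart.abel_aux (μ : ℕ → ℕ) (hstep : ∀ k, μ (k + 1) ≤ μ k) (N : ℕ) :
    ∑ i ∈ Finset.Icc 1 N, i * (μ (i - 1) - μ i) + N * μ N = ∑ k ∈ Finset.range N, μ k := by
  induction N with
  | zero => simp
  | succ N ih =>
    rw [Finset.sum_Icc_succ_top (by omega), Finset.sum_range_succ, ← ih]
    simp only [Nat.add_sub_cancel]
    obtain ⟨c, hc⟩ : ∃ c, μ N = μ (N + 1) + c := ⟨μ N - μ (N + 1), by have := hstep N; omega⟩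
    rw [hc, Nat.add_sub_cancel_left]
    ring

lemma PPart.telescope_aux (μ : ℕ → ℕ) (hstep : ∀ k, μ (k + 1) ≤ μ k) (k : ℕ) :
    ∀ N, k ≤ N → ∑ i ∈ Finset.Icc (k + 1) N, (μ (i - 1) - μ i) = μ k - μ N := by
  have hanti : Antitone μ := antitone_nat_of_succ_le hstep
  intro N
  induction N with
  | zero => intro h; interval_cases k; simp
  | succ N ih =>
    intro hk
    by_cases hkN : k = N + 1
    · subst hkN; rw [Finset.Icc_eq_empty (by omega)]; simp
    · have hk' : k ≤ N := by omega
      rw [Finset.sum_Icc_succ_top (by omega), ih hk']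
      simp only [Nat.add_sub_cancel]
      have h1 : μ (N + 1) ≤ μ N := hstep N
      have h2 : μ N ≤ μ k := hanti hk'
      omega

/-! ### Descents -/

/-- descent set of a permutation -/
def Dset (p : ℕ) (π : Equiv.Perm (Fin p)) : Finset ℕ := desSet p fun k => ((π k : ℕ))

/-- major index -/
def majF (p : ℕ) (π : Equiv.Perm (Fin p)) : ℕ := (Dset p π).sum id

lemma mem_Dset_bounds {π : Equiv.Perm (Fin p)} {j : ℕ} (h : j ∈ Dset p π) :
    1 ≤ j ∧ j < p := by
  simpa using (Finset.mem_Ico.1 (Finset.mem_filter.1 h).1)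

lemma mem_Dset_iff {π : Equiv.Perm (Fin p)} {j : ℕ} (h1 : 1 ≤ j) (h2 : j < p) :
    j ∈ Dset p π ↔ (π ⟨j, h2⟩ : ℕ) < (π ⟨j - 1, by omega⟩ : ℕ) := by
  unfold Dset desSet
  simp only [Finset.mem_filter, Finset.mem_Ico]
  constructor
  · rintro ⟨-, h1', h2', hlt⟩; exact hlt
  · intro hlt; exact ⟨⟨h1, h2⟩, by omega, h2, hlt⟩

/-- number of descents strictly greater than `k` -/
def dCount (p : ℕ) (π : Equiv.Perm (Fin p)) (k : ℕ) : ℕ :=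
  ∑ j ∈ Dset p π, if k < j then 1 else 0

lemma dCount_succ (π : Equiv.Perm (Fin p)) (k : ℕ) :
    dCount p π k = (if k + 1 ∈ Dset p π then 1 else 0) + dCount p π (k + 1) := by
  unfold dCount
  rw [← Finset.sum_ite_eq (Dset p π) (k + 1) (fun _ => 1), ← Finset.sum_add_distrib]
  refine Finset.sum_congr rfl fun j hj => ?_
  split_ifs <;> omega

lemma dCount_le_maj (π : Equiv.Perm (Fin p)) (k : ℕ) : dCount p π k ≤ majF p π := by
  refine Finset.sum_le_sum fun j hj => ?_
  have := mem_Dset_bounds hj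
  simp only [id]
  split_ifs <;> omega

lemma sum_dCount (π : Equiv.Perm (Fin p)) :
    ∑ k ∈ Finset.range p, dCount p π k = majF p π := by
  unfold dCount majF
  rw [Finset.sum_comm]
  refine Finset.sum_congr rfl fun j hj => ?_
  rw [Finset.sum_ite, Finset.sum_const_zero, add_zero, Finset.sum_const, smul_eq_mul, mul_one]
  have hb := mem_Dset_bounds hj
  have : Finset.filter (fun k => k < j) (Finset.range p) = Finset.range j := by
    ext k; simp only [Finset.mem_filter, Finset.mem_range]; omega
  rw [this]; simp [id]

lemma dCount_zero_of_ge (π : Equiv.Perm (Fin p)) {k : ℕ} (h : p ≤ k + 1) :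
    dCount p π k = 0 := by
  refine Finset.sum_eq_zero fun j hj => ?_
  have := mem_Dset_bounds hj
  rw [if_neg (by omega)]

/-! ### Compatibility -/

/-- the value sequence along positions -/
def lamF (p : ℕ) (σ : Fin p → ℕ) (π : Equiv.Perm (Fin p)) (k : ℕ) : ℕ :=
  if h : k < p then σ (π ⟨k, h⟩) else 0

/-- compatibility of `σ` with the permutation `π` -/
def Compat (p : ℕ) (σ : Fin p → ℕ) (π : Equiv.Perm (Fin p)) : Prop :=
  (∀ a b : Fin p, a ≤ b → σ (π b) ≤ σ (π a)) ∧
  ∀ a b : Fin p, a < b → σ (π a) = σ (π b) → π a < π b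

lemma compat_iff_sort_eq {n : ℕ} (σ : Fin p → Fin (n + 1)) (π : Equiv.Perm (Fin p)) :
    Compat p (fun i => (σ i : ℕ)) π ↔
      Tuple.sort (fun i => OrderDual.toDual (σ i)) = π := by
  rw [eq_comm, Tuple.eq_sort_iff]
  unfold Compat
  constructor
  · rintro ⟨h1, h2⟩
    constructor
    · intro a b hab
      simp only [Function.comp_apply, OrderDual.toDual_le_toDual, Fin.le_def]
      exact h1 a b hab
    · intro i j hij hf
      refine h2 i j hij ?_
      have : σ (π i) = σ (π j) := OrderDual.toDual.injective hf
      exact congrArg Fin.val this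
  · rintro ⟨h1, h2⟩
    constructor
    · intro a b hab
      have h := h1 (a := a) (b := b) hab
      have : σ (π b) ≤ σ (π a) := OrderDual.toDual_le_toDual.mp h
      exact this
    · intro a b hab hf
      have : σ (π a) = σ (π b) := Fin.ext hf
      exact h2 a b hab (congrArg OrderDual.toDual this)

lemma P_lt_irrefl (P : PartialOrder (Fin p)) (a : Fin p) : ¬ P.lt a a := by
  intro h
  rcases (P.lt_iff_le_not_ge a a).mp h with ⟨h1, h2⟩
  exact h2 h1

lemma linext_of_ppart {P : PartialOrder (Fin p)} {σ : Fin p → ℕ} {π : Equiv.Perm (Fin p)}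
    (hpp : IsPPartition p P σ) (hc : Compat p σ π) : IsLinExt p P π := by
  intro a b hlt
  by_contra hab
  have hne : a ≠ b := by rintro rfl; exact P_lt_irrefl P (π a) hlt
  have hab' : ¬ (a.val < b.val) := by rw [← Fin.lt_def]; exact hab
  have hne' : a.val ≠ b.val := fun h => hne (Fin.ext h)
  have hba : b < a := by rw [Fin.lt_def]; omega
  have hbale : b ≤ a := by rw [Fin.le_def]; omega
  obtain ⟨hle, hstrict⟩ := hpp (π a) (π b) hlt
  have h2 : σ (π a) ≤ σ (π b) := hc.1 b a hbale
  have heq : σ (π b) = σ (π a) := le_antisymm hle h2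
  have := hc.2 b a hba heq
  have := hstrict this
  clear hlt
  omega

lemma ppart_of_compat {P : PartialOrder (Fin p)} {σ : Fin p → ℕ} {π : Equiv.Perm (Fin p)}
    (hc : Compat p σ π) (hl : IsLinExt p P π) : IsPPartition p P σ := by
  intro i j hlt
  have hij : π.symm i < π.symm j := by
    apply hl
    simpa using hlt
  have hijle : π.symm i ≤ π.symm j := by
    rw [Fin.le_def]; rw [Fin.lt_def] at hij; omega
  have h1 : σ j ≤ σ i := by
    have := hc.1 (π.symm i) (π.symm j) hijle
    simpa using this
  refine ⟨h1, fun hji => ?_⟩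
  rcases lt_or_eq_of_le h1 with h | h
  · exact h
  · have h2 := hc.2 (π.symm i) (π.symm j) hij (by simpa using h.symm)
    simp only [Equiv.apply_symm_apply] at h2
    rw [Fin.lt_def] at h2 hji
    clear hlt
    omega

/-! ### lamF / muF under compatibility -/

lemma lam_step {σ : Fin p → ℕ} {π : Equiv.Perm (Fin p)} (hc : Compat p σ π)
    {k : ℕ} (hk : k + 1 < p) :
    lamF p σ π (k + 1) + (if k + 1 ∈ Dset p π then 1 else 0) ≤ lamF p σ π k := by
  have hkp : k < p := by omega
  have hmk : (⟨k + 1 - 1, by omega⟩ : Fin p) = ⟨k, hkp⟩ := by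
    apply Fin.ext; simp
  rw [lamF, lamF, dif_pos hk, dif_pos hkp]
  have hmono : σ (π ⟨k + 1, hk⟩) ≤ σ (π ⟨k, hkp⟩) :=
    hc.1 ⟨k, hkp⟩ ⟨k + 1, hk⟩ (by simp)
  by_cases hd : k + 1 ∈ Dset p π
  · rw [if_pos hd]
    rw [mem_Dset_iff (by omega) hk, hmk] at hd
    rcases Nat.lt_or_ge (σ (π ⟨k + 1, hk⟩)) (σ (π ⟨k, hkp⟩)) with h | h
    · omega
    · have heq : σ (π ⟨k, hkp⟩) = σ (π ⟨k + 1, hk⟩) := le_antisymm (by omega) hmono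
      have := hc.2 ⟨k, hkp⟩ ⟨k + 1, hk⟩ (by simp [Fin.lt_def]) heq
      rw [Fin.lt_def] at this
      omega
  · rw [if_neg hd]; omega

lemma lam_step' {σ : Fin p → ℕ} {π : Equiv.Perm (Fin p)} (hc : Compat p σ π) :
    ∀ k, k + 1 < p → lamF p σ π (k + 1) ≤ lamF p σ π k := by
  intro k hk
  have := lam_step hc hk
  split_ifs at this <;> omega

lemma lam_ge_d_aux {σ : Fin p → ℕ} {π : Equiv.Perm (Fin p)} (hc : Compat p σ π) :
    ∀ t k, k + t + 1 = p → dCount p π k ≤ lamF p σ π k := by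
  intro t
  induction t with
  | zero =>
    intro k hk
    have : dCount p π k = 0 := dCount_zero_of_ge π (by omega)
    omega
  | succ t ih =>
    intro k hk
    have hk1 : k + 1 < p := by omega
    have h1 := ih (k + 1) (by omega)
    have h2 := lam_step hc hk1
    rw [dCount_succ π k]
    split_ifs at h2 ⊢ <;> omega

lemma lam_ge_d {σ : Fin p → ℕ} {π : Equiv.Perm (Fin p)} (hc : Compat p σ π)
    {k : ℕ} (hk : k < p) : dCount p π k ≤ lamF p σ π k :=
  lam_ge_d_aux hc (p - k - 1) k (by omega)

/-- `μ` sequence -/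
def muF (p : ℕ) (σ : Fin p → ℕ) (π : Equiv.Perm (Fin p)) (k : ℕ) : ℕ :=
  lamF p σ π k - dCount p π k

lemma lamF_eq_zero {σ : Fin p → ℕ} {π : Equiv.Perm (Fin p)} {k : ℕ} (hk : p ≤ k) :
    lamF p σ π k = 0 := dif_neg (by omega)

lemma muF_p_eq_zero (σ : Fin p → ℕ) (π : Equiv.Perm (Fin p)) :
    muF p σ π p = 0 := by
  unfold muF
  rw [lamF_eq_zero le_rfl]
  omega

lemma mu_step {σ : Fin p → ℕ} {π : Equiv.Perm (Fin p)} (hc : Compat p σ π) :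
    ∀ k, muF p σ π (k + 1) ≤ muF p σ π k := by
  intro k
  unfold muF
  by_cases hk : k + 1 < p
  · have h1 := lam_step hc hk
    have h2 := dCount_succ π k
    have h3 := lam_ge_d hc (show k + 1 < p from hk)
    split_ifs at h1 h2 <;> omega
  · rw [lamF_eq_zero (show p ≤ k + 1 by omega)]
    omega

lemma sum_lamF (σ : Fin p → ℕ) (π : Equiv.Perm (Fin p)) :
    ∑ k ∈ Finset.range p, lamF p σ π k = ∑ i, σ i := by
  rw [← Fin.sum_univ_eq_sum_range]
  rw [show ∑ i : Fin p, lamF p σ π i.val = ∑ i : Fin p, σ (π i) from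
    Finset.sum_congr rfl fun i _ => by rw [lamF, dif_pos i.isLt]]
  exact Equiv.sum_comp π σ

lemma sum_mu_add_maj {σ : Fin p → ℕ} {π : Equiv.Perm (Fin p)} (hc : Compat p σ π) :
    ∑ k ∈ Finset.range p, muF p σ π k + majF p π = ∑ i, σ i := by
  rw [← sum_lamF σ π, ← sum_dCount π, ← Finset.sum_add_distrib]
  refine Finset.sum_congr rfl fun k hk => ?_
  have h := lam_ge_d hc (Finset.mem_range.mp hk)
  unfold muF
  omega

lemma maj_le_sum {σ : Fin p → ℕ} {π : Equiv.Perm (Fin p)} (hc : Compat p σ π) :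
    majF p π ≤ ∑ i, σ i := by
  have := sum_mu_add_maj hc
  omega


/-! ### Backward construction -/

def Sfun (p : ℕ) (g : ℕ →₀ ℕ) (k : ℕ) : ℕ := ∑ j ∈ Finset.Icc (k + 1) p, g j / j

def bwdVal (p : ℕ) (π : Equiv.Perm (Fin p)) (g : ℕ →₀ ℕ) (k : ℕ) : ℕ :=
  Sfun p g k + dCount p π k

lemma Sfun_step (g : ℕ →₀ ℕ) (k : ℕ) : Sfun p g (k + 1) ≤ Sfun p g k :=
  Finset.sum_le_sum_of_subset (Finset.Icc_subset_Icc (by omega) le_rfl)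

lemma sum_Sfun (g : ℕ →₀ ℕ) (hdvd : ∀ j ∈ Finset.Icc 1 p, j ∣ g j) :
    ∑ k ∈ Finset.range p, Sfun p g k = ∑ j ∈ Finset.Icc 1 p, g j := by
  unfold Sfun
  have h1 : ∀ k, ∑ j ∈ Finset.Icc (k + 1) p, g j / j
      = ∑ j ∈ Finset.Icc 1 p, if k < j then g j / j else 0 := by
    intro k
    rw [Finset.sum_ite, Finset.sum_const_zero, add_zero]
    apply Finset.sum_congr
    · ext j; simp only [Finset.mem_filter, Finset.mem_Icc]; omega
    · intros; rfl
  simp only [h1]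
  rw [Finset.sum_comm]
  refine Finset.sum_congr rfl fun j hj => ?_
  rw [Finset.sum_ite, Finset.sum_const_zero, add_zero, Finset.sum_const, smul_eq_mul]
  rw [Finset.mem_Icc] at hj
  have : Finset.filter (fun k => k < j) (Finset.range p) = Finset.range j := by
    ext k; simp only [Finset.mem_filter, Finset.mem_range]; omega
  rw [this, Finset.card_range]
  exact Nat.mul_div_cancel' (hdvd j (Finset.mem_Icc.mpr hj))

lemma bwdVal_step {π : Equiv.Perm (Fin p)} (g : ℕ →₀ ℕ) {k : ℕ} (hk : k + 1 < p) :
    bwdVal p π g (k + 1) + (if k + 1 ∈ Dset p π then 1 else 0) ≤ bwdVal p π g k := by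
  unfold bwdVal
  have h1 := Sfun_step (p := p) g k
  have h2 := dCount_succ π k
  split_ifs at h2 ⊢ <;> omega

/-! ### Forward construction -/

def fwdG (p : ℕ) (σ : Fin p → ℕ) (π : Equiv.Perm (Fin p)) : ℕ →₀ ℕ :=
  Finsupp.onFinset (Finset.Icc 1 p)
    (fun i => if i ∈ Finset.Icc 1 p then i * (muF p σ π (i - 1) - muF p σ π i) else 0)
    (fun a ha => by by_contra h; exact ha (if_neg h))

lemma fwdG_apply (σ : Fin p → ℕ) (π : Equiv.Perm (Fin p)) (i : ℕ) :
    fwdG p σ π i =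
      if i ∈ Finset.Icc 1 p then i * (muF p σ π (i - 1) - muF p σ π i) else 0 := rfl

lemma sum_fwdG {σ : Fin p → ℕ} {π : Equiv.Perm (Fin p)} (hc : Compat p σ π) :
    ∑ i ∈ Finset.Icc 1 p, fwdG p σ π i = ∑ k ∈ Finset.range p, muF p σ π k := by
  rw [show ∑ i ∈ Finset.Icc 1 p, fwdG p σ π i
      = ∑ i ∈ Finset.Icc 1 p, i * (muF p σ π (i - 1) - muF p σ π i) from
    Finset.sum_congr rfl fun i hi => by rw [fwdG_apply, if_pos hi]]
  have := PPart.abel_aux (muF p σ π) (mu_step hc) p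
  rw [muF_p_eq_zero, mul_zero, add_zero] at this
  exact this


/-! ### The fiber cardinality -/

lemma fiber_card (n : ℕ) (P : PartialOrder (Fin p)) (π : Equiv.Perm (Fin p))
    (hl : IsLinExt p P π) :
    ((Finset.univ.filter (fun σ : Fin p → Fin (n + 1) =>
        IsPPartition p P (fun i => (σ i : ℕ)) ∧ (∑ i, (σ i : ℕ)) = n)).filter
      (fun σ => Tuple.sort (fun i => OrderDual.toDual (σ i)) = π)).card
    = if majF p π ≤ n then
        ((Finset.finsuppAntidiag (Finset.Icc 1 p) (n - majF p π)).filter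
          (fun g => ∀ i ∈ Finset.Icc 1 p, i ∣ g i)).card
      else 0 := by
  rw [Finset.filter_filter]
  have hset : (Finset.univ.filter (fun σ : Fin p → Fin (n + 1) =>
        (IsPPartition p P (fun i => (σ i : ℕ)) ∧ (∑ i, (σ i : ℕ)) = n) ∧
          Tuple.sort (fun i => OrderDual.toDual (σ i)) = π))
      = Finset.univ.filter (fun σ : Fin p → Fin (n + 1) =>
          Compat p (fun i => (σ i : ℕ)) π ∧ (∑ i, (σ i : ℕ)) = n) := by
    apply Finset.filter_congr
    intro σ _
    constructor
    · rintro ⟨⟨hpp, hsum⟩, hsort⟩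
      exact ⟨(compat_iff_sort_eq σ π).mpr hsort, hsum⟩
    · rintro ⟨hc, hsum⟩
      exact ⟨⟨ppart_of_compat hc hl, hsum⟩, (compat_iff_sort_eq σ π).mp hc⟩
  rw [hset]
  rcases le_or_gt (majF p π) n with hM | hM
  swap
  · rw [if_neg (by omega), Finset.card_eq_zero, Finset.filter_eq_empty_iff]
    rintro σ - ⟨hc, hsum⟩
    have := maj_le_sum hc
    omega
  rw [if_pos hM]
  apply Finset.card_nbij' (i := fun σ => fwdG p (fun i => (σ i : ℕ)) π)
    (j := fun g i => (⟨min n (bwdVal p π g ((π.symm i : ℕ))),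
      Nat.lt_succ_of_le (min_le_left n _)⟩ : Fin (n + 1)))
  · -- forward maps into target
    intro σ hσ
    simp only [Finset.mem_coe, Finset.mem_filter] at hσ
    obtain ⟨-, hc, hsum⟩ := hσ
    simp only [Finset.mem_coe, Finset.mem_filter]
    refine ⟨?_, ?_⟩
    · rw [Finset.mem_finsuppAntidiag]
      refine ⟨?_, Finsupp.support_onFinset_subset⟩
      rw [sum_fwdG hc]
      have h1 := sum_mu_add_maj hc
      rw [hsum] at h1
      omega
    · intro i hi
      rw [fwdG_apply, if_pos hi]
      exact dvd_mul_right _ _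
  · -- backward maps into source
    intro g hg
    simp only [Finset.mem_coe, Finset.mem_filter, Finset.mem_finsuppAntidiag] at hg
    obtain ⟨⟨hgsum, hgsupp⟩, hgdvd⟩ := hg

    have hSle : ∀ k, k < p → Sfun p g k ≤ n - majF p π := by
      intro k hk
      calc Sfun p g k ≤ ∑ k ∈ Finset.range p, Sfun p g k :=
            Finset.single_le_sum (fun _ _ => Nat.zero_le _) (Finset.mem_range.mpr hk)
        _ = ∑ j ∈ Finset.Icc 1 p, g j := sum_Sfun g hgdvd
        _ = n - majF p π := hgsum
    have hble : ∀ k, k < p → bwdVal p π g k ≤ n := by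
      intro k hk
      have h1 := hSle k hk
      have h2 := dCount_le_maj π k
      unfold bwdVal
      omega
    have hstep : ∀ k, k + 1 < p → bwdVal p π g (k + 1) ≤ bwdVal p π g k := by
      intro k hk
      have := bwdVal_step (π := π) g hk
      split_ifs at this <;> omega
    have htie : ∀ k, k + 1 < p → bwdVal p π g (k + 1) = bwdVal p π g k →
        (fun m => if h : m < p then ((π ⟨m, h⟩ : ℕ)) else 0) k
          < (fun m => if h : m < p then ((π ⟨m, h⟩ : ℕ)) else 0) (k + 1) := by
      intro k hk heq
      have hkp : k < p := by omega
      have hnd : k + 1 ∉ Dset p π := by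
        intro hd
        have h2 := bwdVal_step (π := π) g hk
        rw [if_pos hd] at h2
        omega
      rw [mem_Dset_iff (by omega) hk] at hnd
      have hmk : (⟨k + 1 - 1, by omega⟩ : Fin p) = ⟨k, hkp⟩ := Fin.ext (by simp)
      rw [hmk] at hnd
      have hne : (π ⟨k, hkp⟩ : ℕ) ≠ (π ⟨k + 1, hk⟩ : ℕ) := by
        intro h
        have := π.injective (Fin.ext h)
        rw [Fin.mk.injEq] at this
        omega
      simp only [dif_pos hkp, dif_pos hk]
      omega
    have hcoe : ∀ a : Fin p,
        n ⊓ bwdVal p π g ((π.symm (π a) : ℕ)) = bwdVal p π g (a : ℕ) := by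
      intro a
      rw [Equiv.symm_apply_apply]
      exact min_eq_right (hble _ a.isLt)
    simp only [Finset.mem_coe, Finset.mem_filter]
    refine ⟨Finset.mem_univ _, ⟨?_, ?_⟩, ?_⟩
    · intro a b hab
      simp only [hcoe]
      exact PPart.chain_mono hstep (a : ℕ) (b : ℕ) hab b.isLt
    · intro a b hab heq
      simp only [hcoe] at heq
      have := PPart.chain_tie hstep htie (a : ℕ) (b : ℕ) hab b.isLt heq
      simp only [dif_pos a.isLt, dif_pos b.isLt, Fin.eta] at this
      rw [Fin.lt_def]
      exact this
    · have h1 : ∀ i : Fin p,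
          n ⊓ bwdVal p π g ((π.symm i : ℕ)) = bwdVal p π g ((π.symm i : ℕ)) := by
        intro i
        exact min_eq_right (hble _ (π.symm i).isLt)
      simp only [h1]
      rw [Equiv.sum_comp π.symm (fun i : Fin p => bwdVal p π g (i : ℕ)),
        Fin.sum_univ_eq_sum_range (fun k => bwdVal p π g k) p]
      unfold bwdVal
      rw [Finset.sum_add_distrib, sum_Sfun g hgdvd, hgsum, sum_dCount]
      omega
  · -- left inverse
    intro σ hσ
    rw [Finset.mem_coe, Finset.mem_filter] at hσ
    obtain ⟨-, hc, hsum⟩ := hσ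
    funext i
    apply Fin.ext
    have hkp : ((π.symm i : ℕ)) < p := (π.symm i).isLt
    have hS : Sfun p (fwdG p (fun i => (σ i : ℕ)) π) ((π.symm i : ℕ))
        = muF p (fun i => (σ i : ℕ)) π ((π.symm i : ℕ)) := by
      unfold Sfun
      rw [Finset.sum_congr rfl (fun j hj => ?_),
        PPart.telescope_aux (muF p (fun i => (σ i : ℕ)) π) (mu_step hc) _ p (by omega),
        muF_p_eq_zero, Nat.sub_zero]
      rw [Finset.mem_Icc] at hj
      rw [fwdG_apply, if_pos (Finset.mem_Icc.mpr (by omega))]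
      exact Nat.mul_div_cancel_left _ (by omega)
    have hb : bwdVal p π (fwdG p (fun i => (σ i : ℕ)) π) ((π.symm i : ℕ))
        = lamF p (fun i => (σ i : ℕ)) π ((π.symm i : ℕ)) := by
      unfold bwdVal
      rw [hS]
      have := lam_ge_d hc hkp
      unfold muF
      omega
    have hlam : lamF p (fun i => (σ i : ℕ)) π ((π.symm i : ℕ)) = (σ i : ℕ) := by
      rw [lamF, dif_pos hkp]
      congr 1
      rw [Fin.eta, Equiv.apply_symm_apply]
    show min n (bwdVal p π (fwdG p (fun i => (σ i : ℕ)) π) ((π.symm i : ℕ))) = (σ i : ℕ)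
    rw [hb, hlam]
    exact min_eq_right (by omega)
  · -- right inverse
    intro g hg
    simp only [Finset.mem_coe, Finset.mem_filter, Finset.mem_finsuppAntidiag] at hg
    obtain ⟨⟨hgsum, hgsupp⟩, hgdvd⟩ := hg

    have hSle : ∀ k, k < p → Sfun p g k ≤ n - majF p π := by
      intro k hk
      calc Sfun p g k ≤ ∑ k ∈ Finset.range p, Sfun p g k :=
            Finset.single_le_sum (fun _ _ => Nat.zero_le _) (Finset.mem_range.mpr hk)
        _ = ∑ j ∈ Finset.Icc 1 p, g j := sum_Sfun g hgdvd
        _ = n - majF p π := hgsum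
    have hble : ∀ k, k < p → bwdVal p π g k ≤ n := by
      intro k hk
      have h1 := hSle k hk
      have h2 := dCount_le_maj π k
      unfold bwdVal
      omega
    beta_reduce
    set σ'' : Fin p → ℕ := fun i => (((⟨min n (bwdVal p π g ((π.symm i : ℕ))),
      Nat.lt_succ_of_le (min_le_left n _)⟩ : Fin (n + 1))) : ℕ) with hσ''
    have hlam : ∀ k (hk : k < p), lamF p σ'' π k = bwdVal p π g k := by
      intro k hk
      rw [lamF, dif_pos hk, hσ'']
      simp only [Equiv.symm_apply_apply]
      exact min_eq_right (hble k hk)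
    have hmu : ∀ k, k ≤ p → muF p σ'' π k = Sfun p g k := by
      intro k hk
      rcases Nat.eq_or_lt_of_le hk with rfl | hk'
      · rw [muF_p_eq_zero]
        unfold Sfun
        rw [Finset.Icc_eq_empty (by omega), Finset.sum_empty]
      · unfold muF bwdVal at *
        rw [hlam k hk']
        omega
    apply Finsupp.ext
    intro i
    rw [fwdG_apply]
    by_cases hi : i ∈ Finset.Icc 1 p
    · rw [if_pos hi]
      rw [Finset.mem_Icc] at hi
      rw [hmu (i - 1) (by omega), hmu i (by omega)]
      have hins : Finset.Icc i p = insert i (Finset.Icc (i + 1) p) := by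
        ext j
        simp only [Finset.mem_insert, Finset.mem_Icc]
        omega
      have hStep : Sfun p g (i - 1) = g i / i + Sfun p g i := by
        unfold Sfun
        rw [show i - 1 + 1 = i by omega, hins,
          Finset.sum_insert (by simp only [Finset.mem_Icc]; omega)]
      rw [hStep, Nat.add_sub_cancel]
      exact Nat.mul_div_cancel' (hgdvd i (Finset.mem_Icc.mpr hi))
    · rw [if_neg hi]
      exact (Finsupp.notMem_support_iff.mp (fun hmem => hi (hgsupp hmem))).symm


/-! ### Power series -/

def invFactor (i : ℕ) : PowerSeries ℤ := PowerSeries.mk fun n => if i ∣ n then 1 else 0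

lemma one_sub_X_pow_mul_invFactor {i : ℕ} (hi : 0 < i) :
    (1 - (PowerSeries.X : PowerSeries ℤ) ^ i) * invFactor i = 1 := by
  ext n
  simp only [sub_mul, one_mul, map_sub, PowerSeries.coeff_X_pow_mul', invFactor,
    PowerSeries.coeff_mk, PowerSeries.coeff_one]
  by_cases hB : i ≤ n
  · rw [if_pos hB, if_neg (show ¬ n = 0 by omega)]
    have hAC : i ∣ n ↔ i ∣ n - i := by
      constructor
      · intro h; exact Nat.dvd_sub h dvd_rfl
      · intro h
        have : n = n - i + i := by omega
        rw [this]
        exact Nat.dvd_add h dvd_rfl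
    by_cases hA : i ∣ n
    · rw [if_pos hA, if_pos (hAC.mp hA)]; ring
    · rw [if_neg hA, if_neg (fun hc => hA (hAC.mpr hc))]; ring
  · rw [if_neg hB]
    by_cases hD : n = 0
    · subst hD; rw [if_pos (dvd_zero i), if_pos rfl]; ring
    · rw [if_neg (fun hA => absurd (Nat.le_of_dvd (by omega) hA) hB), if_neg hD]; ring

lemma coeff_prod_invFactor (k : ℕ) :
    PowerSeries.coeff k (∏ i ∈ Finset.Icc 1 p, invFactor i)
      = (((Finset.finsuppAntidiag (Finset.Icc 1 p) k).filter
          (fun g => ∀ i ∈ Finset.Icc 1 p, i ∣ g i)).card : ℤ) := by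
  rw [PowerSeries.coeff_prod]
  calc ∑ l ∈ Finset.finsuppAntidiag (Finset.Icc 1 p) k,
        ∏ i ∈ Finset.Icc 1 p, PowerSeries.coeff (l i) (invFactor i)
      = ∑ l ∈ Finset.finsuppAntidiag (Finset.Icc 1 p) k,
          if (∀ i ∈ Finset.Icc 1 p, i ∣ l i) then (1 : ℤ) else 0 := by
        refine Finset.sum_congr rfl fun l _ => ?_
        simp only [invFactor, PowerSeries.coeff_mk]
        exact Finset.prod_boole
    _ = _ := by rw [Finset.sum_boole]; congr 2; ext g; simp only [Finset.mem_filter]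

lemma numPPart_eq (n : ℕ) (P : PartialOrder (Fin p)) :
    (numPPartitionsOf p P n : ℤ)
      = ∑ π ∈ Finset.univ.filter (IsLinExt p P),
          PowerSeries.coeff n ((PowerSeries.X : PowerSeries ℤ) ^ majF p π
            * ∏ i ∈ Finset.Icc 1 p, invFactor i) := by
  rw [numPPartitionsOf]
  rw [Finset.card_eq_sum_card_fiberwise
    (f := fun σ : Fin p → Fin (n + 1) => Tuple.sort (fun i => OrderDual.toDual (σ i)))
    (t := Finset.univ.filter (IsLinExt p P)) ?hmem]
  case hmem =>
    intro σ hσ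
    simp only [Finset.mem_coe, Finset.mem_filter] at hσ ⊢
    obtain ⟨-, hpp, -⟩ := hσ
    exact ⟨Finset.mem_univ _,
      linext_of_ppart hpp ((compat_iff_sort_eq σ _).mpr rfl)⟩
  push_cast
  refine Finset.sum_congr rfl fun π hπ => ?_
  rw [Finset.mem_filter] at hπ
  rw [fiber_card n P π hπ.2, PowerSeries.coeff_X_pow_mul', coeff_prod_invFactor]
  split_ifs with h
  · rfl
  · simp

end PPartAux

/-- `(∏_{i=1}^{p} (1 − q^i)) ⬝ ∑_{n≥0} a_n q^n = ∑_{π ∈ L(P)} q^{maj π}` in `ℤ[[q]]`. -/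
theorem maj_generating_function (p : ℕ) (hp : 0 < p) (P : PartialOrder (Fin p)) :
    (∏ i ∈ Finset.Icc 1 p, (1 - (PowerSeries.X : PowerSeries ℤ) ^ i)) *
      PowerSeries.mk (fun n => (numPPartitionsOf p P n : ℤ)) =
    ∑ π ∈ Finset.univ.filter (IsLinExt p P),
      (PowerSeries.X : PowerSeries ℤ) ^ ((desSet p fun k => ((π k : ℕ))).sum id) := by
  have hG : (∏ i ∈ Finset.Icc 1 p, (1 - (PowerSeries.X : PowerSeries ℤ) ^ i))
      * ∏ i ∈ Finset.Icc 1 p, invFactor i = 1 := by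
    rw [← Finset.prod_mul_distrib]
    refine Finset.prod_eq_one fun i hi => ?_
    exact one_sub_X_pow_mul_invFactor (by rw [Finset.mem_Icc] at hi; omega)
  have hmk : PowerSeries.mk (fun n => (numPPartitionsOf p P n : ℤ))
      = ∑ π ∈ Finset.univ.filter (IsLinExt p P),
          (PowerSeries.X : PowerSeries ℤ) ^ majF p π * ∏ i ∈ Finset.Icc 1 p, invFactor i := by
    ext n
    rw [PowerSeries.coeff_mk, numPPart_eq n P, map_sum]
  rw [hmk, Finset.mul_sum]
  refine Finset.sum_congr rfl fun π hπ => ?_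
  rw [show (∏ i ∈ Finset.Icc 1 p, (1 - (PowerSeries.X : PowerSeries ℤ) ^ i))
        * ((PowerSeries.X : PowerSeries ℤ) ^ majF p π * ∏ i ∈ Finset.Icc 1 p, invFactor i)
      = (PowerSeries.X : PowerSeries ℤ) ^ majF p π
        * ((∏ i ∈ Finset.Icc 1 p, (1 - (PowerSeries.X : PowerSeries ℤ) ^ i))
          * ∏ i ∈ Finset.Icc 1 p, invFactor i) by ring, hG, mul_one]
  rfl
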